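/- For all integers k ≥ 0 and l ≥ 1, the element x^k w^l lies in the image ∂(A) of the map ∂ (viewed as a ℂ-linear endomorphism of A); that is, there exists a ∈ A with ∂(a) = x^k w^l. -/

import Mathlib

theorem xk_wl_in_image_partial
    (q : ℝ) (hq0 : 0 < q) (hq1 : q < 1)
    {A : Type*} [Ring A] [Algebra ℂ A]
    (z w : A)
    (hzw : w * z - ((q : ℂ) ^ 2) • (z * w) = ((1 : ℂ) - (q : ℂ) ^ 2) • (1 : A))
    (x : A) (hx : x = 1 - z * w)
    (σ : A ≃ₐ[ℂ] A) (hσz : σ z = ((q : ℂ) ^ 2) • z)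
    (hσw : σ w = (((q : ℂ) ^ 2)⁻¹) • w)
    (D : A →ₗ[ℂ] A)
    (hD : ∀ a b : A, D (a * b) = D a * σ b + a * D b)
    (hDz : D z = w) (hDw : D w = 0)
    :
    ∀ k l : ℕ, 1 ≤ l → ∃ a : A, D a = x ^ k * w ^ l := by
  set Q : ℂ := (q : ℂ) ^ 2 with hQdef
  have hqC : (q : ℂ) ≠ 0 := by exact_mod_cast hq0.ne'
  have hQ : Q ≠ 0 := pow_ne_zero _ hqC
  -- basic commutation relations
  have hwz : w * z = Q • (z * w) + ((1 : ℂ) - Q) • (1 : A) := by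
    have := hzw
    rw [sub_eq_iff_eq_add] at this
    rw [this]; abel
  have hzw1 : z * w = 1 - x := by rw [hx]; abel
  have hwx : w * x = Q • (x * w) := by
    rw [hx]
    rw [mul_sub, mul_one, sub_mul, one_mul, ← mul_assoc, hwz]
    simp only [add_mul, sub_mul, mul_sub, mul_one, smul_mul_assoc, smul_sub, sub_smul, one_smul,
      mul_assoc, one_mul, smul_smul]
    module
  have hxz : x * z = Q • (z * x) := by
    rw [hx]
    rw [sub_mul, one_mul, mul_sub, mul_one, mul_assoc, hwz]
    simp only [mul_add, sub_mul, mul_sub, mul_one, mul_smul_comm, smul_sub, sub_smul, one_smul,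
      smul_mul_assoc, one_mul, mul_assoc, smul_smul]
    module
  have hzx : z * x = Q⁻¹ • (x * z) := by
    rw [hxz, smul_smul, inv_mul_cancel₀ hQ, one_smul]
  -- powers
  have hwxk : ∀ k : ℕ, w * x ^ k = (Q ^ k) • (x ^ k * w) := by
    intro k
    induction k with
    | zero => simp
    | succ n ih =>
      rw [pow_succ, ← mul_assoc, ih, smul_mul_assoc, mul_assoc, hwx, mul_smul_comm, smul_smul,
        pow_succ]
      rw [mul_assoc]
  have hzxk : ∀ k : ℕ, z * x ^ k = ((Q⁻¹) ^ k) • (x ^ k * z) := by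
    intro k
    induction k with
    | zero => simp
    | succ n ih =>
      rw [pow_succ, ← mul_assoc, ih, smul_mul_assoc, mul_assoc, hzx, mul_smul_comm, smul_smul,
        pow_succ]
      rw [mul_assoc]
  -- sigma facts
  have hσx : σ x = x := by
    rw [hx, map_sub, map_one, map_mul, hσz, hσw, smul_mul_assoc, mul_smul_comm, smul_smul,
      mul_inv_cancel₀ hQ, one_smul]
  have hσxk : ∀ k : ℕ, σ (x ^ k) = x ^ k := by
    intro k; rw [map_pow, hσx]
  have hσwm : ∀ m : ℕ, σ (w ^ m) = ((Q⁻¹) ^ m) • w ^ m := by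
    intro m; rw [map_pow, hσw, smul_pow]
  -- D facts
  have hD1 : D (1 : A) = 0 := by
    have h := hD 1 1
    simp only [mul_one, one_mul, map_one] at h
    exact left_eq_add.mp h
  have hDwm : ∀ m : ℕ, D (w ^ m) = 0 := by
    intro m
    induction m with
    | zero => simpa using hD1
    | succ n ih => rw [pow_succ, hD (w ^ n) w, ih, hDw, zero_mul, mul_zero, add_zero]
  have hDx : D x = (-Q⁻¹) • (w * w) := by
    rw [hx, map_sub, hD z w, hDz, hDw, hσw, mul_zero, add_zero, hD1, mul_smul_comm]
    module
  -- D of powers of x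
  have hDxk : ∀ k : ℕ, ∃ c : ℝ, c < 0 ∧ D (x ^ (k + 1)) = ((c : ℂ)) • (x ^ k * (w * w)) := by
    intro k
    induction k with
    | zero =>
      refine ⟨-(q ^ 2)⁻¹, neg_lt_zero.mpr (by positivity), ?_⟩
      rw [pow_one, pow_zero, one_mul, hDx]
      norm_num [hQdef]
    | succ n ih =>
      obtain ⟨c, hc, hDc⟩ := ih
      refine ⟨c - q ^ (4 * n + 2), by nlinarith [pow_pos hq0 (4 * n + 2)], ?_⟩
      have h1 : D (x ^ (n + 2)) = D x * σ (x ^ (n + 1)) + x * D (x ^ (n + 1)) := by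
        rw [← hD x (x ^ (n + 1)), ← pow_succ']
      rw [h1, hσxk, hDc, hDx, mul_smul_comm, ← mul_assoc, ← pow_succ']
      have h2 : (w * w) * x ^ (n + 1) = (Q ^ (n + 1) * Q ^ (n + 1)) • (x ^ (n + 1) * (w * w)) := by
        rw [mul_assoc, hwxk, mul_smul_comm, ← mul_assoc, hwxk, smul_mul_assoc, smul_smul,
          mul_assoc]
      rw [smul_mul_assoc, h2, smul_smul]
      have h3 : -Q⁻¹ * (Q ^ (n + 1) * Q ^ (n + 1)) = -((q : ℂ) ^ (4 * n + 2)) := by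
        field_simp [hQdef]
        ring
      rw [h3]
      push_cast
      module
  -- main induction
  intro k l hl
  obtain ⟨m, rfl⟩ := Nat.exists_eq_add_of_le hl
  induction k with
  | zero =>
    refine ⟨(Q ^ m) • (z * w ^ m), ?_⟩
    rw [map_smul, hD z (w ^ m), hDz, hDwm, mul_zero, add_zero, hσwm, mul_smul_comm, smul_smul,
      ← mul_pow, mul_inv_cancel₀ hQ, one_pow, one_smul, pow_zero, one_mul, add_comm 1 m, pow_succ']
  | succ n ih =>
    obtain ⟨a, ha⟩ := ih
    obtain ⟨c, hc, hDc⟩ := hDxk n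
    set α : ℝ := q ^ (4 * n + 2) - c with hα
    have hα0 : 0 < α := by
      rw [hα]
      have h1 : 0 < q ^ (4 * n + 2) := pow_pos hq0 _
      linarith
    refine ⟨((α : ℂ))⁻¹ • ((((q : ℂ) ^ (2 * n) * (q : ℂ) ^ (2 * m)) • (z * (x ^ (n + 1) * w ^ m)))
      - (((c : ℂ)) • a)), ?_⟩
    rw [map_smul, map_sub, map_smul, map_smul, ha, hD z (x ^ (n + 1) * w ^ m)]
    rw [hD (x ^ (n + 1)) (w ^ m), hDwm, mul_zero, add_zero, hσwm, hDc, map_mul, hσxk, hσwm]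
    rw [hDz]
    have e1 : w * (x ^ (n + 1) * w ^ m) = Q ^ (n + 1) • (x ^ (n + 1) * w ^ (1 + m)) := by
      rw [← mul_assoc, hwxk, smul_mul_assoc, mul_assoc, pow_add w 1 m, pow_one]
    have e2 : z * (x ^ n * (w * (w * w ^ m)))
        = (Q⁻¹ ^ n) • (x ^ n * w ^ (1 + m)) - (Q⁻¹ ^ n) • (x ^ (n + 1) * w ^ (1 + m)) := by
      have : z * (w * (w * w ^ m)) = (1 - x) * w ^ (1 + m) := by
        rw [← hzw1, pow_add w 1 m, pow_one, mul_assoc]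
      rw [← mul_assoc, hzxk, smul_mul_assoc, mul_assoc, this, sub_mul, one_mul, mul_sub,
        smul_sub, ← mul_assoc, ← pow_succ]
    have hαC : (α : ℂ) = (q : ℂ) ^ (4 * n + 2) - (c : ℂ) := by
      rw [hα]; push_cast; ring
    have hαC0 : (α : ℂ) ≠ 0 := by exact_mod_cast hα0.ne'
    have hb : ((q : ℂ) ^ (4 * n + 2) - (c : ℂ)) ≠ 0 := hαC ▸ hαC0
    simp only [mul_smul_comm, smul_mul_assoc, smul_smul, smul_add, smul_sub, mul_assoc]
    rw [e1, e2]
    simp only [smul_smul, smul_add, smul_sub]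
    match_scalars
    · rw [hαC, hQdef]
      field_simp [hb, hqC]
      simp only [one_div, inv_pow, ← pow_mul]
      field_simp
      ring
    · rw [hαC, hQdef]
      field_simp [hb, hqC]
      simp only [one_div, inv_pow, ← pow_mul]
      field_simp
      ring
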